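/- Let Y ⊂ ℝ^d be convex compact, let each h_t : Y → ℝ be convex with ‖∇h_t(z)‖ ≤ G for all z ∈ Y, let R be 1-strongly convex with sup_{z,z'∈Y} D_R(z‖z') ≤ D₁ and with w ↦ D_R(z‖w) G-Lipschitz for every z ∈ Y. Suppose an algorithm produces iterates z_{t+1} = r_{t+1} + argmin_{y∈Y} { ∇h_t(z_t)ᵀ(y − z_t) + (1/η) D_R(y‖z_t) } with ‖r_{t+1}‖₂ ≤ C_η for all t. Then its regret satisfies Σ_{t=1}^T h_t(z_t) − min_{z∈Y} Σ_{t=1}^T h_t(z) ≤ C_η T G / η + D₁ / η + η G² T / 2. -/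

import Mathlib

open scoped RealInnerProductSpace

/-- Bregman divergence `D_R(x ‖ y) = R x - R y - ⟪∇R y, x - y⟫`. -/
noncomputable def bregman {E : Type*} [NormedAddCommGroup E] [InnerProductSpace ℝ E]
    [CompleteSpace E] (R : E → ℝ) (x y : E) : ℝ :=
  R x - R y - ⟪gradient R y, x - y⟫

section aux
variable {E : Type*} [NormedAddCommGroup E] [InnerProductSpace ℝ E] [CompleteSpace E]

lemma bregman_three (R : E → ℝ) (w y z : E) :
    bregman R w z = bregman R w y + bregman R y z + ⟪gradient R y - gradient R z, w - y⟫ := by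
  simp only [bregman, inner_sub_left, inner_sub_right]
  ring

lemma convex_grad_le {Y : Set E} (hYcv : Convex ℝ Y) {f : E → ℝ}
    (hf : ConvexOn ℝ Y f) {x u : E} (hx : x ∈ Y) (hu : u ∈ Y)
    (hd : DifferentiableAt ℝ f x) :
    ⟪gradient f x, u - x⟫ ≤ f u - f x := by
  have hF : HasFDerivAt f ((InnerProductSpace.toDual ℝ E) (gradient f x)) x :=
    hd.hasGradientAt.hasFDerivAt
  set v := u - x with hv
  have hc : HasDerivAt (fun s : ℝ => x + s • v) v 0 := by
    simpa using ((hasDerivAt_id (0:ℝ)).smul_const v).const_add x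
  have hc0 : x + (0:ℝ) • v = x := by simp
  have hcomp : HasDerivAt (fun s : ℝ => f (x + s • v)) ⟪gradient f x, v⟫ 0 := by
    have := hF.comp_hasDerivAt_of_eq (0:ℝ) hc hc0.symm
    exact this
  -- slope bound from convexity
  have hslope : ∀ s : ℝ, s ∈ Set.Ioc (0:ℝ) 1 →
      slope (fun s : ℝ => f (x + s • v)) 0 s ≤ f u - f x := by
    intro s hs
    have hxs : x + s • v = (1 - s) • x + s • u := by
      rw [hv]; module
    have hmem := hf.2 hx hu (by linarith [hs.2] : (0:ℝ) ≤ 1 - s) hs.1.le (by ring)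
    have : f (x + s • v) ≤ (1 - s) * f x + s * f u := by rw [hxs]; simpa using hmem
    have h0 : x + (0:ℝ) • v = x := hc0
    rw [slope_def_field, h0, sub_zero, div_le_iff₀ hs.1]
    nlinarith [this]
  have htend : Filter.Tendsto (slope (fun s : ℝ => f (x + s • v)) 0) (nhdsWithin 0 (Set.Ioi 0))
      (nhds ⟪gradient f x, v⟫) := by
    have := hasDerivAt_iff_tendsto_slope.mp hcomp
    exact this.mono_left (nhdsWithin_mono _ (fun a ha => Set.mem_compl_singleton_iff.mpr (ne_of_gt ha)))
  refine le_of_tendsto htend ?_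
  filter_upwards [Ioc_mem_nhdsGT (by norm_num : (0:ℝ) < 1)] with s hs
  exact hslope s hs

lemma opt_ineq {Y : Set E} (hYcv : Convex ℝ Y) {R : E → ℝ} {G η : ℝ} (hG : 0 < G) (hη : 0 < η)
    (hRsc : ∀ x ∈ Y, ∀ y ∈ Y, (1 / 2) * ‖x - y‖ ^ 2 ≤ bregman R x y)
    (hDRLip : ∀ z ∈ Y, LipschitzOnWith (Real.toNNReal G) (fun w => bregman R z w) Y)
    {g zz yy : E} (hz : zz ∈ Y) (hy : yy ∈ Y)
    (hmin : IsMinOn (fun w => ⟪g, w - zz⟫ + (1 / η) * bregman R w zz) Y yy)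
    {u : E} (hu : u ∈ Y) :
    0 ≤ η * ⟪g, u - yy⟫ + (bregman R u zz - bregman R u yy - bregman R yy zz) := by
  set N : ℝ := ‖u - yy‖ with hN
  have hN0 : 0 ≤ N := norm_nonneg _
  set B : ℝ := ⟪g, u - yy⟫ with hB
  set X : ℝ := ⟪gradient R yy - gradient R zz, u - yy⟫ with hX
  have hXeq : bregman R u zz - bregman R u yy - bregman R yy zz = X := by
    rw [bregman_three R u yy zz]; ring
  rw [hXeq]
  -- main estimate for each s ∈ (0,1]
  have key : ∀ s : ℝ, 0 < s → s ≤ 1 → 0 ≤ η * B + X + G * s * N := by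
    intro s hs0 hs1
    set w : E := yy + s • (u - yy) with hw
    have hwY : w ∈ Y := by
      have : w = (1 - s) • yy + s • u := by rw [hw]; module
      rw [this]
      exact hYcv hy hu (by linarith) hs0.le (by ring)
    -- minimality
    have hmin' : ⟪g, yy - zz⟫ + (1 / η) * bregman R yy zz
        ≤ ⟪g, w - zz⟫ + (1 / η) * bregman R w zz := hmin hwY
    have hw_zz : w - zz = (yy - zz) + s • (u - yy) := by rw [hw]; module
    have hinner : ⟪g, w - zz⟫ = ⟪g, yy - zz⟫ + s * B := by
      rw [hw_zz, inner_add_right, real_inner_smul_right]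
    have hw_yy : w - yy = s • (u - yy) := by rw [hw]; module
    have hbw : bregman R w zz = bregman R w yy + bregman R yy zz + s * X := by
      rw [bregman_three R w yy zz, hw_yy, real_inner_smul_right]
    -- Lipschitz bound on bregman R w yy
    have hDw : bregman R w yy ≤ G * s ^ 2 * N := by
      set P : ℝ := R w - R yy with hP
      set c : ℝ := ⟪gradient R yy, u - yy⟫ with hc
      set d : ℝ := ⟪gradient R w, u - yy⟫ with hd
      have hu_w : u - w = (1 - s) • (u - yy) := by rw [hw]; module
      have hyy_w : yy - w = (-s) • (u - yy) := by rw [hw]; module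
      have heq1 : bregman R u yy - bregman R u w = P - c + (1 - s) * d := by
        simp only [bregman, hu_w, hP, hc, hd, real_inner_smul_right]
        ring
      have heq2 : 0 ≤ s * d - P := by
        have h0 : (0:ℝ) ≤ bregman R yy w := le_trans (by positivity) (hRsc yy hy w hwY)
        have : bregman R yy w = -P + s * d := by
          simp only [bregman, hyy_w, hP, hd, real_inner_smul_right]
          ring
        linarith [this ▸ h0]
      have hlip : |bregman R u yy - bregman R u w| ≤ G * (s * N) := by
        have h1 := LipschitzOnWith.dist_le_mul (hDRLip u hu) yy hy w hwY
        rw [Real.dist_eq, dist_eq_norm] at h1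
        have h2 : ‖yy - w‖ = s * N := by
          rw [hyy_w, norm_smul]
          simp [abs_of_pos hs0, hN]
        rw [h2] at h1
        calc |bregman R u yy - bregman R u w| ≤ (Real.toNNReal G : ℝ) * (s * N) := h1
          _ = G * (s * N) := by rw [Real.coe_toNNReal G hG.le]
      have habs := abs_le.mp hlip
      have hgoal : bregman R w yy = P - s * c := by
        simp only [bregman, hw_yy, hP, hc, real_inner_smul_right]
        try ring
      rw [hgoal]
      nlinarith [habs.2, heq2, mul_le_mul_of_nonneg_left habs.2 hs0.le,
        mul_nonneg (by linarith : (0:ℝ) ≤ 1 - s) heq2]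
    -- combine
    have hcomb : 0 ≤ s * (η * B) + s * X + bregman R w yy := by
      have := hmin'
      rw [hinner, hbw] at this
      have h3 : 0 ≤ s * B + (1 / η) * (bregman R w yy + s * X) := by linarith
      have h4 : 0 ≤ η * (s * B + (1 / η) * (bregman R w yy + s * X)) :=
        mul_nonneg hη.le h3
      have hne : η ≠ 0 := ne_of_gt hη
      have h5 : η * (s * B + (1 / η) * (bregman R w yy + s * X))
          = η * s * B + (bregman R w yy + s * X) := by
        field_simp
      rw [h5] at h4
      linarith
    have h6 : 0 ≤ s * (η * B + X + G * s * N) := by nlinarith [hcomb, hDw]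
    nlinarith [h6, hs0]
  -- limit s → 0
  by_contra hcon
  push_neg at hcon
  set A : ℝ := η * B + X with hA
  have hApos : 0 < -A := by linarith
  set s : ℝ := min 1 ((-A) / (G * N + 1)) with hs
  have hGN : 0 < G * N + 1 := by positivity
  have hs0 : 0 < s := lt_min one_pos (by positivity)
  have hs1 : s ≤ 1 := min_le_left _ _
  have hsle : s ≤ (-A) / (G * N + 1) := min_le_right _ _
  have hkey := key s hs0 hs1
  have : G * s * N < -A := by
    have h7 : G * s * N ≤ G * N * ((-A) / (G * N + 1)) := by
      have := mul_le_mul_of_nonneg_left hsle (by positivity : (0:ℝ) ≤ G * N)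
      nlinarith [this]
    have h8 : G * N * ((-A) / (G * N + 1)) < -A := by
      have ht : (G * N + 1) * ((-A) / (G * N + 1)) = -A := by field_simp
      have htpos : 0 < (-A) / (G * N + 1) := div_pos hApos hGN
      nlinarith [ht, htpos]
    linarith
  linarith

end aux

/-- perturbed online mirror descent regret bound,
Lemma 6 of Ghai–Lu–Hazan 2022. -/
theorem perturbed_omd_regret
    {E : Type*} [NormedAddCommGroup E] [InnerProductSpace ℝ E] [CompleteSpace E]
    (Y : Set E) (hYne : Y.Nonempty) (hYcv : Convex ℝ Y) (hYcp : IsCompact Y)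
    (G η D₁ Cη : ℝ) (hG : 1 < G) (hη : 0 < η) (hD₁ : 0 < D₁) (hCη : 0 ≤ Cη)
    (h : ℕ → E → ℝ)
    (hconv : ∀ t, ConvexOn ℝ Y (h t))
    (hdiff : ∀ t, ∀ z ∈ Y, DifferentiableAt ℝ (h t) z)
    (hgrad : ∀ t, ∀ z ∈ Y, ‖gradient (h t) z‖ ≤ G)
    (R : E → ℝ)
    (hRsc : ∀ x ∈ Y, ∀ y ∈ Y, (1 / 2) * ‖x - y‖ ^ 2 ≤ bregman R x y)
    (hD1bd : ∀ z ∈ Y, ∀ z' ∈ Y, bregman R z z' ≤ D₁)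
    (hDRLip : ∀ z ∈ Y, LipschitzOnWith (Real.toNNReal G) (fun w => bregman R z w) Y)
    (T : ℕ) (hT : 1 ≤ T)
    (z y r : ℕ → E)
    (hzY : ∀ t, z t ∈ Y)
    (hymem : ∀ t, y (t + 1) ∈ Y)
    (hymin : ∀ t, IsMinOn
      (fun w => ⟪gradient (h t) (z t), w - z t⟫ + (1 / η) * bregman R w (z t)) Y (y (t + 1)))
    (hzr : ∀ t, z (t + 1) = r (t + 1) + y (t + 1))
    (hr : ∀ t, ‖r (t + 1)‖ ≤ Cη) :
    ∀ u ∈ Y, ∑ t ∈ Finset.Icc 1 T, (h t (z t) - h t u)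
      ≤ Cη * T * G / η + D₁ / η + η * G ^ 2 * T / 2 := by
  intro u hu
  have hG0 : (0:ℝ) < G := lt_trans one_pos hG
  set φ : ℕ → ℝ := fun t => bregman R u (z t) with hφ
  have step : ∀ t : ℕ, h t (z t) - h t u
      ≤ η * G ^ 2 / 2 + G * Cη / η + (1 / η) * (φ t - φ (t + 1)) := by
    intro t
    set g := gradient (h t) (z t) with hg
    have hopt := opt_ineq hYcv hG0 hη hRsc hDRLip (hzY t) (hymem t) (hymin t) hu
    have hconvh : ⟪g, u - z t⟫ ≤ h t u - h t (z t) :=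
      convex_grad_le hYcv (hconv t) (hzY t) hu (hdiff t _ (hzY t))
    set a : ℝ := ‖y (t + 1) - z t‖ with ha
    have F2 : ⟪g, z t - y (t + 1)⟫ ≤ G * a := by
      calc ⟪g, z t - y (t + 1)⟫ ≤ ‖g‖ * ‖z t - y (t + 1)‖ := real_inner_le_norm _ _
        _ ≤ G * a := by
            rw [norm_sub_rev (z t)]
            exact mul_le_mul_of_nonneg_right (hgrad t _ (hzY t)) (norm_nonneg _)
    have F4 : (1 / 2) * a ^ 2 ≤ bregman R (y (t + 1)) (z t) :=
      hRsc _ (hymem t) _ (hzY t)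
    have F5 : bregman R u (z (t + 1)) ≤ bregman R u (y (t + 1)) + G * Cη := by
      have h1 := LipschitzOnWith.dist_le_mul (hDRLip u hu) (z (t + 1)) (hzY (t + 1))
        (y (t + 1)) (hymem t)
      rw [Real.dist_eq, dist_eq_norm] at h1
      have h2 : ‖z (t + 1) - y (t + 1)‖ = ‖r (t + 1)‖ := by rw [hzr t]; congr 1; abel
      have h3 : (Real.toNNReal G : ℝ) = G := Real.coe_toNNReal G hG0.le
      rw [h2, h3] at h1
      have h4 := (abs_le.mp h1).2
      nlinarith [hr t, mul_le_mul_of_nonneg_left (hr t) hG0.le]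
    -- inner product split
    have Fsplit : ⟪g, u - z t⟫ = ⟪g, u - y (t + 1)⟫ + ⟪g, y (t + 1) - z t⟫ := by
      rw [← inner_add_right]; congr 1; abel
    have Fyz : ⟪g, y (t + 1) - z t⟫ = - ⟪g, z t - y (t + 1)⟫ := by
      rw [← inner_neg_right]; congr 1; abel
    -- η-multiplied claim
    have claim : η * (h t (z t) - h t u)
        ≤ η ^ 2 * G ^ 2 / 2 + G * Cη + (φ t - φ (t + 1)) := by
      nlinarith [hopt, hconvh, F2, F4, F5, sq_nonneg (a - η * G),
        mul_le_mul_of_nonneg_left hconvh hη.le, mul_le_mul_of_nonneg_left F2 hη.le,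
        Fsplit, Fyz]
    have hrhs : η * (η * G ^ 2 / 2 + G * Cη / η + (1 / η) * (φ t - φ (t + 1)))
        = η ^ 2 * G ^ 2 / 2 + G * Cη + (φ t - φ (t + 1)) := by
      field_simp
    exact le_of_mul_le_mul_left (by rw [hrhs]; exact claim) hη
  have hsum := Finset.sum_le_sum (fun t _ => step t)
    (s := Finset.Icc 1 T)
  have htel : ∑ t ∈ Finset.Icc 1 T, (φ t - φ (t + 1)) = φ 1 - φ (T + 1) := by
    rw [← Finset.Ico_add_one_right_eq_Icc, Finset.sum_Ico_eq_sum_range]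
    have hTT : T + 1 - 1 = T := by omega
    rw [hTT]
    have := Finset.sum_range_sub' (f := fun i => φ (1 + i)) (n := T)
    simpa [add_assoc, Nat.add_comm 1 T] using this
  have hcard : (Finset.Icc 1 T).card = T := by
    rw [Nat.card_Icc]; omega
  have hconstsum : ∑ _t ∈ Finset.Icc 1 T, (η * G ^ 2 / 2 + G * Cη / η)
      = (T : ℝ) * (η * G ^ 2 / 2 + G * Cη / η) := by
    rw [Finset.sum_const, hcard, nsmul_eq_mul]
  have hsplit : ∑ t ∈ Finset.Icc 1 T,
      (η * G ^ 2 / 2 + G * Cη / η + (1 / η) * (φ t - φ (t + 1)))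
      = (T : ℝ) * (η * G ^ 2 / 2 + G * Cη / η) + (1 / η) * (φ 1 - φ (T + 1)) := by
    rw [Finset.sum_add_distrib, hconstsum, ← Finset.mul_sum, htel]
  have hφ1 : φ 1 ≤ D₁ := hD1bd u hu (z 1) (hzY 1)
  have hφT : 0 ≤ φ (T + 1) :=
    le_trans (by positivity) (hRsc u hu (z (T + 1)) (hzY (T + 1)))
  calc ∑ t ∈ Finset.Icc 1 T, (h t (z t) - h t u)
      ≤ (T : ℝ) * (η * G ^ 2 / 2 + G * Cη / η) + (1 / η) * (φ 1 - φ (T + 1)) := by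
        rw [← hsplit]; exact hsum
    _ ≤ (T : ℝ) * (η * G ^ 2 / 2 + G * Cη / η) + (1 / η) * D₁ := by
        have : φ 1 - φ (T + 1) ≤ D₁ := by linarith
        have h1η : (0:ℝ) < 1 / η := by positivity
        nlinarith [this, h1η]
    _ = Cη * T * G / η + D₁ / η + η * G ^ 2 * T / 2 := by
        field_simp
        ring
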